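/- Suppose T*_1 ⊆ T*_0 (so on the disagreement region S = T*_0 \ T*_1, the classifier T*_0 predicts positively), and let T be a well-defined classifier with T*_1 ⊆ T ⊆ T*_0. Assume TPR_0(T*_0) < TPR_1(T*_1), TNR_0(T*_0) > TNR_1(T*_1), and the positivity conditions ∫_{T*_0 \ T} f_{0,1} dν > 0, ∫_{T \ T*_1} f_{1,1} dν > 0, ∫_{T*_0 \ T} f_{0,0} dν > 0, ∫_{T \ T*_1} f_{1,0} dν > 0. Then F_U(T) = F_DU + F_MU(T), and F_MU(T) > 0. -/
import Mathlib


open MeasureTheory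

/-- True positive rate of group `a` under classifier `T`: `TPR_a(T) = ∫_T f_{a,1} dν`. -/
noncomputable def tprOf {Ω : Type*} [MeasurableSpace Ω] (ν : Measure Ω)
    (f : Bool → Bool → Ω → ℝ) (a : Bool) (T : Set Ω) : ℝ :=
  ∫ x in T, f a true x ∂ν

/-- True negative rate of group `a` under classifier `T`: `TNR_a(T) = ∫_{Tᶜ} f_{a,0} dν`. -/
noncomputable def tnrOf {Ω : Type*} [MeasurableSpace Ω] (ν : Measure Ω)
    (f : Bool → Bool → Ω → ℝ) (a : Bool) (T : Set Ω) : ℝ :=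
  ∫ x in Tᶜ, f a false x ∂ν

/-- Equalized-odds unfairness. -/
noncomputable def unfairness {Ω : Type*} [MeasurableSpace Ω] (ν : Measure Ω)
    (f : Bool → Bool → Ω → ℝ) (T : Set Ω) : ℝ :=
  (1/2) * |tprOf ν f true T - tprOf ν f false T|
    + (1/2) * |tnrOf ν f true T - tnrOf ν f false T|

/-- Data unfairness relative to reference (per-group optimal) classifiers `T*_0, T*_1`. -/
noncomputable def dataUnfairness {Ω : Type*} [MeasurableSpace Ω] (ν : Measure Ω)
    (f : Bool → Bool → Ω → ℝ) (T0 T1 : Set Ω) : ℝ :=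
  (1/2) * |tprOf ν f false T0 - tprOf ν f true T1|
    + (1/2) * |tnrOf ν f false T0 - tnrOf ν f true T1|

/-- Model unfairness of `T` relative to reference classifiers `T*_0, T*_1`. -/
noncomputable def modelUnfairness {Ω : Type*} [MeasurableSpace Ω] (ν : Measure Ω)
    (f : Bool → Bool → Ω → ℝ) (T0 T1 T : Set Ω) : ℝ :=
  (1/2) * |(tprOf ν f false T - tprOf ν f false T0)
      - (tprOf ν f true T - tprOf ν f true T1)|
    + (1/2) * |(tnrOf ν f false T - tnrOf ν f false T0)
      - (tnrOf ν f true T - tnrOf ν f true T1)|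

/-- Equality case of the unfairness decomposition (Condition 1 of Theorem 3):
if `T*_1 ⊆ T*_0` (so on the disagreement region `S = T*_0 \ T*_1` the classifier
`T*_0` predicts positively), `T` is well-defined (`T*_1 ⊆ T ⊆ T*_0`),
`TPR₀(T*_0) < TPR₁(T*_1)`, `TNR₀(T*_0) > TNR₁(T*_1)`, and the stated integrals are
strictly positive, then `F_U(T) = F_DU + F_MU(T)` and `F_MU(T) > 0`. -/
theorem unfairness_decomposition_equality_cond1
    {Ω : Type*} [MeasurableSpace Ω] (ν : Measure Ω) [SigmaFinite ν]
    (f : Bool → Bool → Ω → ℝ)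
    (hf_meas : ∀ a y, Measurable (f a y))
    (hf_nonneg : ∀ a y x, 0 ≤ f a y x)
    (hf_int : ∀ a y, Integrable (f a y) ν)
    (hf_one : ∀ a y, ∫ x, f a y x ∂ν = 1)
    (T0 T1 : Set Ω) (hT0 : MeasurableSet T0) (hT1 : MeasurableSet T1)
    (hsub : T1 ⊆ T0)
    (T : Set Ω) (hT : MeasurableSet T) (hT1T : T1 ⊆ T) (hTT0 : T ⊆ T0)
    (htpr : tprOf ν f false T0 < tprOf ν f true T1)
    (htnr : tnrOf ν f true T1 < tnrOf ν f false T0)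
    (hpos1 : 0 < ∫ x in T0 \ T, f false true x ∂ν)
    (hpos2 : 0 < ∫ x in T \ T1, f true true x ∂ν)
    (hpos3 : 0 < ∫ x in T0 \ T, f false false x ∂ν)
    (hpos4 : 0 < ∫ x in T \ T1, f true false x ∂ν) :
    unfairness ν f T = dataUnfairness ν f T0 T1 + modelUnfairness ν f T0 T1 T ∧
      0 < modelUnfairness ν f T0 T1 T := by
  have key : ∀ (a y : Bool) (A B : Set Ω), MeasurableSet B → B ⊆ A →
      (∫ x in A, f a y x ∂ν) - (∫ x in B, f a y x ∂ν) = ∫ x in A \ B, f a y x ∂ν := by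
    intro a y A B hB hBA
    rw [MeasureTheory.integral_diff hB ((hf_int a y).integrableOn) hBA]
  have h1 : tprOf ν f false T0 - tprOf ν f false T = ∫ x in T0 \ T, f false true x ∂ν :=
    key false true T0 T hT hTT0
  have h2 : tprOf ν f true T - tprOf ν f true T1 = ∫ x in T \ T1, f true true x ∂ν :=
    key true true T T1 hT1 hT1T
  have hc1 : Tᶜ \ T0ᶜ = T0 \ T := by ext x; simp [Set.mem_diff]; tauto
  have hc2 : T1ᶜ \ Tᶜ = T \ T1 := by ext x; simp [Set.mem_diff]; tauto
  have h3 : tnrOf ν f false T - tnrOf ν f false T0 = ∫ x in T0 \ T, f false false x ∂ν := by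
    have := key false false Tᶜ T0ᶜ hT0.compl (Set.compl_subset_compl.mpr hTT0)
    rwa [hc1] at this
  have h4 : tnrOf ν f true T1 - tnrOf ν f true T = ∫ x in T \ T1, f true false x ∂ν := by
    have := key true false T1ᶜ Tᶜ hT.compl (Set.compl_subset_compl.mpr hT1T)
    rwa [hc2] at this
  have habs1 : |tprOf ν f true T - tprOf ν f false T|
      = (tprOf ν f true T1 - tprOf ν f false T0)
        + ((∫ x in T0 \ T, f false true x ∂ν) + ∫ x in T \ T1, f true true x ∂ν) := by
    rw [abs_of_pos (by linarith)]; linarith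
  have habs2 : |tnrOf ν f true T - tnrOf ν f false T|
      = (tnrOf ν f false T0 - tnrOf ν f true T1)
        + ((∫ x in T0 \ T, f false false x ∂ν) + ∫ x in T \ T1, f true false x ∂ν) := by
    rw [abs_of_neg (by linarith)]; linarith
  have hd1 : |tprOf ν f false T0 - tprOf ν f true T1|
      = tprOf ν f true T1 - tprOf ν f false T0 := by
    rw [abs_of_neg (by linarith)]; ring
  have hd2 : |tnrOf ν f false T0 - tnrOf ν f true T1|
      = tnrOf ν f false T0 - tnrOf ν f true T1 := by
    rw [abs_of_pos (by linarith)]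
  have hm1 : |(tprOf ν f false T - tprOf ν f false T0) - (tprOf ν f true T - tprOf ν f true T1)|
      = (∫ x in T0 \ T, f false true x ∂ν) + ∫ x in T \ T1, f true true x ∂ν := by
    rw [abs_of_neg (by linarith)]; linarith
  have hm2 : |(tnrOf ν f false T - tnrOf ν f false T0) - (tnrOf ν f true T - tnrOf ν f true T1)|
      = (∫ x in T0 \ T, f false false x ∂ν) + ∫ x in T \ T1, f true false x ∂ν := by
    rw [abs_of_pos (by linarith)]; linarith
  constructor
  · unfold unfairness dataUnfairness modelUnfairness
    rw [habs1, habs2, hd1, hd2, hm1, hm2]; ring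
  · unfold modelUnfairness
    rw [hm1, hm2]; linarith
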